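/- Let k be a positive integer, let a ≥ 3k², and let S = {a} ∪ {a + i² : 1 ≤ i ≤ k}. Then for every 1 ≤ r ≤ a−1, N_r = ι_k(r)·a + r; that is, the minimum in the formula N_r = min over m ∈ ℕ of ( ι_k(ma + r)·a + (ma + r) ) is attained at m = 0. -/

import Mathlib

/-- `Nr S a r` is the least element of the additive submonoid of `ℕ` generated by `S`
that is congruent to `r` modulo `a`. -/
noncomputable def Nr (S : Set ℕ) (a r : ℕ) : ℕ :=
  sInf {n : ℕ | n ∈ AddSubmonoid.closure S ∧ n % a = r}

/-- `iotaK k n` is the least number of squares `i²` with `1 ≤ i ≤ k` needed to write `n`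
as a sum of such squares (with `iotaK k 0 = 0`). -/
noncomputable def iotaK (k n : ℕ) : ℕ :=
  sInf {s : ℕ | ∃ x : Fin k → ℕ, ∑ i, x i * (i.1 + 1) ^ 2 = n ∧ ∑ i, x i = s}

lemma iotaK_le (k n s : ℕ) (x : Fin k → ℕ)
    (h1 : ∑ i, x i * (i.1 + 1) ^ 2 = n) (h2 : ∑ i, x i = s) : iotaK k n ≤ s :=
  Nat.sInf_le ⟨x, h1, h2⟩

lemma sum_single_mul (k : ℕ) (j : Fin k) (c : ℕ) (f : Fin k → ℕ) :
    ∑ i, (Pi.single j c : Fin k → ℕ) i * f i = c * f j := by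
  rw [Fintype.sum_eq_single j]
  · simp
  · intro i hi; simp [Pi.single_eq_of_ne hi]

lemma sum_single (k : ℕ) (j : Fin k) (c : ℕ) : ∑ i, (Pi.single j c : Fin k → ℕ) i = c := by
  rw [Fintype.sum_eq_single j]
  · simp
  · intro i hi; simp [Pi.single_eq_of_ne hi]

lemma iotaK_spec (k n : ℕ) (hk : 0 < k) :
    ∃ x : Fin k → ℕ, ∑ i, x i * (i.1 + 1) ^ 2 = n ∧ ∑ i, x i = iotaK k n := by
  have hne : {s : ℕ | ∃ x : Fin k → ℕ, ∑ i, x i * (i.1 + 1) ^ 2 = n ∧ ∑ i, x i = s}.Nonempty := by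
    refine ⟨n, Pi.single ⟨0, hk⟩ n, ?_, sum_single k _ n⟩
    rw [sum_single_mul]; simp
  exact Nat.sInf_mem hne

lemma iotaK_zero (k : ℕ) : iotaK k 0 = 0 :=
  Nat.le_zero.mp (iotaK_le k 0 0 0 (by simp) (by simp))

lemma iotaK_add_le (k : ℕ) (hk : 0 < k) (m n : ℕ) :
    iotaK k (m + n) ≤ iotaK k m + iotaK k n := by
  obtain ⟨x, hx1, hx2⟩ := iotaK_spec k m hk
  obtain ⟨y, hy1, hy2⟩ := iotaK_spec k n hk
  refine iotaK_le k _ _ (x + y) ?_ ?_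
  · simp only [Pi.add_apply, add_mul, Finset.sum_add_distrib, hx1, hy1]
  · simp only [Pi.add_apply, Finset.sum_add_distrib, hx2, hy2]

lemma iotaK_sq_le_one (k w : ℕ) (hk : 0 < k) (hw : w ≤ k) : iotaK k (w ^ 2) ≤ 1 := by
  rcases Nat.eq_zero_or_pos w with rfl | hw1
  · simp [iotaK_zero]
  · refine iotaK_le k _ _ (Pi.single ⟨w - 1, by omega⟩ 1) ?_ (sum_single k _ 1)
    rw [sum_single_mul]
    simp only [one_mul]
    congr 1
    omega

lemma iotaK_le_four (k n : ℕ) (hk : 0 < k) (hn : n ≤ k ^ 2) : iotaK k n ≤ 4 := by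
  obtain ⟨b, c, d, e, h⟩ := Nat.sum_four_squares n
  have hb : b ≤ k := by nlinarith
  have hc : c ≤ k := by nlinarith
  have hd : d ≤ k := by nlinarith
  have he : e ≤ k := by nlinarith
  calc iotaK k n = iotaK k (b ^ 2 + c ^ 2 + d ^ 2 + e ^ 2) := by rw [h]
    _ ≤ iotaK k (b ^ 2 + c ^ 2 + d ^ 2) + iotaK k (e ^ 2) := iotaK_add_le k hk _ _
    _ ≤ (iotaK k (b ^ 2 + c ^ 2) + iotaK k (d ^ 2)) + iotaK k (e ^ 2) :=
        Nat.add_le_add_right (iotaK_add_le k hk _ _) _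
    _ ≤ ((iotaK k (b ^ 2) + iotaK k (c ^ 2)) + iotaK k (d ^ 2)) + iotaK k (e ^ 2) :=
        Nat.add_le_add_right (Nat.add_le_add_right (iotaK_add_le k hk _ _) _) _
    _ ≤ 4 := by
        have := iotaK_sq_le_one k b hk hb
        have := iotaK_sq_le_one k c hk hc
        have := iotaK_sq_le_one k d hk hd
        have := iotaK_sq_le_one k e hk he
        omega

lemma iotaK_mul_sq (k q : ℕ) (hk : 0 < k) : iotaK k (q * k ^ 2) ≤ q := by
  refine iotaK_le k _ _ (Pi.single ⟨k - 1, by omega⟩ q) ?_ (sum_single k _ q)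
  rw [sum_single_mul]
  simp only [Fin.val_mk]
  rw [Nat.sub_add_cancel hk]

lemma iotaK_le_div (k n : ℕ) (hk : 0 < k) : iotaK k n ≤ n / k ^ 2 + 4 := by
  have h : n = n / k ^ 2 * k ^ 2 + n % k ^ 2 := by
    conv_lhs => rw [← Nat.div_add_mod n (k ^ 2)]
    ring
  calc iotaK k n = iotaK k (n / k ^ 2 * k ^ 2 + n % k ^ 2) := by rw [← h]
    _ ≤ iotaK k (n / k ^ 2 * k ^ 2) + iotaK k (n % k ^ 2) := iotaK_add_le k hk _ _
    _ ≤ n / k ^ 2 + 4 := by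
        have h1 := iotaK_mul_sq k (n / k ^ 2) hk
        have h2 := iotaK_le_four k (n % k ^ 2) hk (le_of_lt (Nat.mod_lt n (by positivity)))
        omega

lemma struct_mem_closure (k a t : ℕ) (x : Fin k → ℕ) (ht : ∑ i, x i ≤ t) :
    t * a + ∑ i, x i * (i.1 + 1) ^ 2 ∈
      AddSubmonoid.closure (({a} : Set ℕ) ∪ {n : ℕ | ∃ i : ℕ, 1 ≤ i ∧ i ≤ k ∧ n = a + i ^ 2}) := by
  set S := (({a} : Set ℕ) ∪ {n : ℕ | ∃ i : ℕ, 1 ≤ i ∧ i ≤ k ∧ n = a + i ^ 2})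
  have h1 : a ∈ AddSubmonoid.closure S := AddSubmonoid.subset_closure (Or.inl rfl)
  have h2 : ∀ i : Fin k, a + (i.1 + 1) ^ 2 ∈ AddSubmonoid.closure S := fun i =>
    AddSubmonoid.subset_closure (Or.inr ⟨i.1 + 1, by omega, by omega, rfl⟩)
  obtain ⟨u, rfl⟩ : ∃ u, t = ∑ i, x i + u := ⟨t - ∑ i, x i, by omega⟩
  have key : (∑ i, x i + u) * a + ∑ i, x i * (i.1 + 1) ^ 2
      = u * a + ∑ i, x i * (a + (i.1 + 1) ^ 2) := by
    simp only [mul_add, Finset.sum_add_distrib, ← Finset.sum_mul, add_mul]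
    ring
  rw [key]
  refine AddSubmonoid.add_mem _ ?_ (AddSubmonoid.sum_mem _ fun i _ => ?_)
  · simpa [nsmul_eq_mul] using AddSubmonoid.nsmul_mem _ h1 u
  · simpa [nsmul_eq_mul] using AddSubmonoid.nsmul_mem _ (h2 i) (x i)

lemma mem_closure_struct (k a : ℕ) {n : ℕ}
    (hn : n ∈ AddSubmonoid.closure
      (({a} : Set ℕ) ∪ {n : ℕ | ∃ i : ℕ, 1 ≤ i ∧ i ≤ k ∧ n = a + i ^ 2})) :
    ∃ (t : ℕ) (x : Fin k → ℕ), n = t * a + ∑ i, x i * (i.1 + 1) ^ 2 ∧ ∑ i, x i ≤ t := by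
  induction hn using AddSubmonoid.closure_induction with
  | mem y hy =>
    rcases hy with rfl | ⟨i, hi1, hi2, rfl⟩
    · exact ⟨1, 0, by simp, by simp⟩
    · refine ⟨1, Pi.single ⟨i - 1, by omega⟩ 1, ?_, ?_⟩
      · have hs : (∑ j, (Pi.single (⟨i - 1, by omega⟩ : Fin k) 1 : Fin k → ℕ) j * (j.1 + 1) ^ 2)
            = i ^ 2 := by
          rw [Fintype.sum_eq_single (⟨i - 1, by omega⟩ : Fin k)]
          · simp only [Pi.single_eq_same, one_mul, Fin.val_mk]
            rw [Nat.sub_add_cancel hi1]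
          · intro j hj; simp [Pi.single_eq_of_ne hj]
        rw [hs]; ring
      · rw [sum_single]
  | zero => exact ⟨0, 0, by simp, by simp⟩
  | add p q _ _ ihp ihq =>
    obtain ⟨t1, x1, h1, h1'⟩ := ihp
    obtain ⟨t2, x2, h2, h2'⟩ := ihq
    refine ⟨t1 + t2, x1 + x2, ?_, ?_⟩
    · simp only [Pi.add_apply, add_mul, Finset.sum_add_distrib, h1, h2]
      ring
    · simp only [Pi.add_apply, Finset.sum_add_distrib]
      omega

theorem stmt14 (k a : ℕ) (hk : 0 < k) (ha : 3 * k ^ 2 ≤ a) :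
    ∀ r : ℕ, 1 ≤ r → r ≤ a - 1 →
      Nr (({a} : Set ℕ) ∪ {n : ℕ | ∃ i : ℕ, 1 ≤ i ∧ i ≤ k ∧ n = a + i ^ 2}) a r
          = iotaK k r * a + r ∧
      Nr (({a} : Set ℕ) ∪ {n : ℕ | ∃ i : ℕ, 1 ≤ i ∧ i ≤ k ∧ n = a + i ^ 2}) a r
          = sInf (Set.range fun m : ℕ => iotaK k (m * a + r) * a + (m * a + r)) := by
  intro r hr1 hr2
  have hk2 : 0 < k ^ 2 := by positivity
  have ha0 : 0 < a := by omega
  have hra : r < a := by omega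
  set S := (({a} : Set ℕ) ∪ {n : ℕ | ∃ i : ℕ, 1 ≤ i ∧ i ≤ k ∧ n = a + i ^ 2}) with hS
  set T := {n : ℕ | n ∈ AddSubmonoid.closure S ∧ n % a = r} with hT
  -- every candidate value is in T
  have hmemT : ∀ m : ℕ, iotaK k (m * a + r) * a + (m * a + r) ∈ T := by
    intro m
    obtain ⟨x, hx1, hx2⟩ := iotaK_spec k (m * a + r) hk
    constructor
    · have hmem := struct_mem_closure k a (iotaK k (m * a + r)) x (le_of_eq hx2)
      have he : iotaK k (m * a + r) * a + (m * a + r)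
          = iotaK k (m * a + r) * a + ∑ i, x i * (i.1 + 1) ^ 2 := by
        rw [hx1]
      rw [he]
      exact hmem
    · show (iotaK k (m * a + r) * a + (m * a + r)) % a = r
      rw [show iotaK k (m * a + r) * a + (m * a + r) = a * (iotaK k (m * a + r) + m) + r by ring,
        Nat.mul_add_mod, Nat.mod_eq_of_lt hra]
  -- lower bound for elements of T
  have hlb : ∀ n ∈ T, iotaK k r * a + r ≤ n := by
    rintro n ⟨hn, hnmod⟩
    obtain ⟨t, x, rfl, hst⟩ := mem_closure_struct k a hn
    set s := ∑ i, x i with hs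
    set q := ∑ i, x i * (i.1 + 1) ^ 2 with hq
    have hq1 : q ≤ s * k ^ 2 := by
      rw [hq, hs, Finset.sum_mul]
      refine Finset.sum_le_sum fun i _ => Nat.mul_le_mul_left _ ?_
      have : i.1 + 1 ≤ k := i.2
      exact Nat.pow_le_pow_left this 2
    have hq2 : q % a = r := by
      rwa [mul_comm, Nat.mul_add_mod] at hnmod
    have hq3 : q = a * (q / a) + r := by
      conv_lhs => rw [← Nat.div_add_mod q a]
      rw [hq2]
    set j := q / a with hj
    rcases Nat.eq_zero_or_pos j with hj0 | hj1
    · rw [hj0] at hq3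
      simp only [Nat.mul_zero, Nat.zero_add] at hq3
      have h1 : iotaK k r ≤ s := iotaK_le k r s x (by rw [← hq, hq3]) rfl
      have h2 : iotaK k r * a ≤ t * a := Nat.mul_le_mul_right a (le_trans h1 hst)
      calc iotaK k r * a + r ≤ t * a + r := Nat.add_le_add_right h2 r
        _ = t * a + q := by rw [hq3]
    · have hb1 : r / k ^ 2 * k ^ 2 ≤ r := Nat.div_mul_le_self r (k ^ 2)
      have hb2 : 3 * k ^ 2 * j ≤ a * j := Nat.mul_le_mul_right j ha
      have h1 : 3 * j + r / k ^ 2 ≤ s := by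
        have hmul : (3 * j + r / k ^ 2) * k ^ 2 ≤ s * k ^ 2 := by nlinarith
        exact Nat.le_of_mul_le_mul_right hmul hk2
      have h2 : iotaK k r ≤ r / k ^ 2 + 4 := iotaK_le_div k r hk
      have h3 : iotaK k r ≤ s + j := by omega
      calc iotaK k r * a + r ≤ (s + j) * a + r := Nat.add_le_add_right (Nat.mul_le_mul_right a h3) r
        _ = s * a + (a * j + r) := by ring
        _ ≤ t * a + (a * j + r) := Nat.add_le_add_right (Nat.mul_le_mul_right a hst) _
        _ = t * a + q := by rw [← hq3]
  have hTne : T.Nonempty := ⟨_, hmemT 0⟩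
  have hfirst : Nr S a r = iotaK k r * a + r := by
    refine le_antisymm ?_ (le_csInf hTne hlb)
    have := hmemT 0
    simp only [zero_mul, zero_add] at this
    exact Nat.sInf_le this
  refine ⟨hfirst, ?_⟩
  refine le_antisymm ?_ ?_
  · refine le_csInf (Set.range_nonempty _) ?_
    rintro b ⟨m, rfl⟩
    exact Nat.sInf_le (hmemT m)
  · have h0 : iotaK k r * a + r ∈ Set.range fun m : ℕ => iotaK k (m * a + r) * a + (m * a + r) :=
      ⟨0, by simp⟩
    rw [hfirst]
    exact Nat.sInf_le h0
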